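/- arXiv:1307.0650 — 10 statements merged into one kernel-verified Lean document; each statement's English description precedes it below -/
import Mathlib

section
/- Let q ∈ ℝ be fixed and f : (0,1] → ℝ satisfy f(xy) + f((1-x)y) - f(y) = (f(x) + f(1-x))·y^q for all x ∈ (0,1), y ∈ (0,1]. Then the function G(u,v) = f(u) + f(v) - f(u+v), defined on D₂ = {(u,v) : u,v,u+v ∈ (0,1)}, is symmetric, satisfies the cocycle equation G(x,y) + G(x+y,z) = G(y,z) + G(x,y+z) on D₃, and is q-homogeneous: G(tu,tv) = t^q·G(u,v) for all t ∈ (0,1) and (u,v) ∈ D₂. -/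
/-!
Symmetry and the cocycle identity hold for the Cauchy difference of any function. For
homogeneity, the equation with `x = u / (u + v)` and `y = u + v` expresses the difference
`f u + f v - f (u + v)` as `(u + v) ^ q` times a quantity that depends only on the ratio `u : v`;
scaling `u` and `v` by `t` leaves the ratio unchanged and multiplies `(u + v) ^ q` by `t ^ q`.
-/

open Set

section FunctionalEquation

variable {q : ℝ} {f : ℝ → ℝ}

theorem cauchy_diff_eq_mul_rpow
    (hf : ∀ x ∈ Ioo (0:ℝ) 1, ∀ y ∈ Ioc (0:ℝ) 1,
      f (x * y) + f ((1 - x) * y) - f y = (f x + f (1 - x)) * y ^ q)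
    {u v : ℝ} (hu : 0 < u) (hv : 0 < v) (huv : u + v ≤ 1) :
    f u + f v - f (u + v) = (f (u / (u + v)) + f (v / (u + v))) * (u + v) ^ q := by
  have hs : 0 < u + v := add_pos hu hv
  have hx : u / (u + v) ∈ Ioo (0:ℝ) 1 := ⟨div_pos hu hs, (div_lt_one hs).2 (by linarith)⟩
  have h1x : 1 - u / (u + v) = v / (u + v) := by field_simp; ring
  have key := hf _ hx (u + v) ⟨hs, huv⟩
  rwa [h1x, div_mul_cancel₀ _ hs.ne', div_mul_cancel₀ _ hs.ne'] at key

theorem cauchy_diff_mul_eq_rpow_mul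
    (hf : ∀ x ∈ Ioo (0:ℝ) 1, ∀ y ∈ Ioc (0:ℝ) 1,
      f (x * y) + f ((1 - x) * y) - f y = (f x + f (1 - x)) * y ^ q)
    {t u v : ℝ} (ht : 0 < t) (hu : 0 < u) (hv : 0 < v) (huv : u + v ≤ 1)
    (htuv : t * (u + v) ≤ 1) :
    f (t * u) + f (t * v) - f (t * u + t * v) = t ^ q * (f u + f v - f (u + v)) := by
  have hs : 0 < u + v := add_pos hu hv
  have ratio (w : ℝ) : t * w / (t * u + t * v) = w / (u + v) := by
    rw [← mul_add, mul_div_mul_left _ _ ht.ne']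
  rw [cauchy_diff_eq_mul_rpow hf (mul_pos ht hu) (mul_pos ht hv) (by rwa [← mul_add]),
    cauchy_diff_eq_mul_rpow hf hu hv huv, ratio, ratio, ← mul_add,
    Real.mul_rpow ht.le hs.le]
  ring

end FunctionalEquation

theorem stmt_1 (q : ℝ) (f : ℝ → ℝ)
    (hf : ∀ x ∈ Set.Ioo (0:ℝ) 1, ∀ y ∈ Set.Ioc (0:ℝ) 1,
      f (x * y) + f ((1 - x) * y) - f y = (f x + f (1 - x)) * y ^ q)
    (G : ℝ → ℝ → ℝ) (hG : ∀ u v, G u v = f u + f v - f (u + v)) :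
    (∀ u v, u ∈ Set.Ioo (0:ℝ) 1 → v ∈ Set.Ioo (0:ℝ) 1 → u + v ∈ Set.Ioo (0:ℝ) 1 →
      G u v = G v u) ∧
    (∀ x y z, x ∈ Set.Ioo (0:ℝ) 1 → y ∈ Set.Ioo (0:ℝ) 1 → z ∈ Set.Ioo (0:ℝ) 1 →
      x + y + z ∈ Set.Ioo (0:ℝ) 1 →
      G x y + G (x + y) z = G y z + G x (y + z)) ∧
    (∀ t ∈ Set.Ioo (0:ℝ) 1, ∀ u v, u ∈ Set.Ioo (0:ℝ) 1 → v ∈ Set.Ioo (0:ℝ) 1 →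
      u + v ∈ Set.Ioo (0:ℝ) 1 → G (t * u) (t * v) = t ^ q * G u v) := by
  refine ⟨fun u v _ _ _ => ?_, fun x y z _ _ _ _ => ?_, ?_⟩
  · rw [hG, hG, add_comm v u]
    ring
  · simp only [hG, add_assoc]
    ring
  · rintro t ⟨ht0, ht1⟩ u v ⟨hu, -⟩ ⟨hv, -⟩ ⟨huv, huv1⟩
    rw [hG, hG]
    exact cauchy_diff_mul_eq_rpow_mul hf ht0 hu hv huv1.le (by nlinarith)
end

section
/- Let q ∈ ℝ, q ≠ 1, and suppose f : (0,1] → ℝ satisfies f(xy) + f((1-x)y) - f(y) = (f(x) + f(1-x))·y^q for all x ∈ (0,1), y ∈ (0,1], and f is Lebesgue measurable. Then there exist constants c, c* ∈ ℝ such that f(x) = c*·x + c·x^q for all x ∈ (0,1) and f(1) = 0. -/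
/-!
Putting `x = 1/2`, `y = 1` gives `f 1 = 0`. For fixed `z`, the function
`w ↦ f (w z) - z ^ q f w - w f z` satisfies Cauchy's equation on `(0, 1]` (take `x = a / (a + b)`
and `y = a + b`, resp. `y = (a + b) z`). A measurable solution is bounded near `0` by Steinhaus'
theorem, hence linear, and this one vanishes at `1`; so `f (u z) = z ^ q f u + u f z`. Comparing
this with the identity for `u` and `z` swapped at `z = 1/2` gives
`f x ((1/2) ^ q - 1/2) = f (1/2) (x ^ q - x)`, and `(1/2) ^ q ≠ 1/2` as `q ≠ 1`.
-/

open MeasureTheory Set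

def AdditiveOnUnitInterval (H : ℝ → ℝ) : Prop :=
  ∀ a b : ℝ, 0 < a → 0 < b → a + b ≤ 1 → H (a + b) = H a + H b

namespace AdditiveOnUnitInterval

variable {H : ℝ → ℝ}

theorem apply_natCast_mul (hH : AdditiveOnUnitInterval H) {u : ℝ} (hu : 0 < u) {n : ℕ}
    (hn : 0 < n) (hnu : n * u ≤ 1) : H (n * u) = n * H u := by
  induction n, hn using Nat.le_induction with
  | base => simp
  | succ n hn ih =>
    push_cast at hnu ⊢
    have hn' : (0 : ℝ) < n := by exact_mod_cast hn
    rw [add_one_mul, hH _ _ (by positivity) hu (by linarith), ih (by linarith)]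
    ring

theorem apply_ratCast (hH : AdditiveOnUnitInterval H) {r : ℚ} (hr₀ : 0 < r) (hr₁ : r ≤ 1) :
    H r = r * H 1 := by
  obtain ⟨p, hp⟩ := Int.eq_ofNat_of_zero_le (Rat.num_nonneg.mpr hr₀.le)
  have hp₀ : 0 < p := by have := Rat.num_pos.mpr hr₀; omega
  have hr : (r : ℝ) = p * (1 / r.den) := by rw [Rat.cast_def, hp, mul_one_div, Int.cast_natCast]
  have hd : (0 : ℝ) < r.den := by exact_mod_cast r.pos
  have hunit : H 1 = r.den * H (1 / r.den) := by
    rw [← hH.apply_natCast_mul (by positivity) r.pos (by field_simp; rfl),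
      mul_one_div_cancel hd.ne']
  rw [hr, hH.apply_natCast_mul (by positivity) hp₀ (by rw [← hr]; exact_mod_cast hr₁), hunit]
  field_simp

open scoped Pointwise in
theorem exists_bound_near_zero (hH : AdditiveOnUnitInterval H)
    (hmeas : Measurable ((Ioc (0 : ℝ) 1).domRestrict H)) :
    ∃ δ > 0, ∃ C, ∀ t ∈ Ioo 0 δ, |H t| ≤ C := by
  set A : ℕ → Set ℝ := fun N =>
    Subtype.val '' {w : Ioc (0 : ℝ) 1 | 1 / 2 < (w : ℝ) ∧ |H w| ≤ N}
  have hA : ∀ N, MeasurableSet (A N) := fun N =>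
    measurableSet_Ioc.subtype_image <|
      (measurableSet_lt measurable_const measurable_subtype_coe).inter
        (measurableSet_le hmeas.abs measurable_const)
  -- Steinhaus: some sublevel set of `|H|` in `(1/2, 1]` has `(-δ, δ)` in its difference set.
  obtain ⟨N, hN⟩ : ∃ N, 0 < volume (A N) := by
    by_contra! h
    have hcover : Ioc (1 / 2 : ℝ) 1 ⊆ ⋃ N, A N := fun t ht =>
      mem_iUnion.mpr
        ⟨⌈|H t|⌉₊, ⟨t, ⟨by linarith [ht.1], ht.2⟩⟩, ⟨ht.1, Nat.le_ceil _⟩, rfl⟩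
    have := measure_mono_null hcover (measure_iUnion_null fun N => nonpos_iff_eq_zero.mp (h N))
    norm_num at this
  obtain ⟨δ, hδ, hball⟩ :=
    Metric.mem_nhds_iff.mp (Measure.sub_mem_nhds_zero_of_addHaar_pos volume (A N) (hA N) hN)
  refine ⟨δ, hδ, 2 * N, fun t ht => ?_⟩
  obtain ⟨_, ⟨⟨a, ha⟩, ⟨-, haN⟩, rfl⟩, _, ⟨⟨b, hb⟩, ⟨-, hbN⟩, rfl⟩, hab⟩ :=
    hball <| show t ∈ Metric.ball 0 δ by
      rw [Real.ball_eq_Ioo]; constructor <;> linarith [ht.1, ht.2]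
  have hsplit : H a = H b + H t := by
    rw [← hH b t hb.1 ht.1 (by linarith [ha.2])]; congr 1; simp only at hab; linarith
  calc |H t| = |H a - H b| := by rw [hsplit, add_sub_cancel_left]
    _ ≤ |H a| + |H b| := abs_sub _ _
    _ ≤ 2 * N := by simp only at haN hbN; linarith

theorem eq_zero_of_apply_one (hH : AdditiveOnUnitInterval H)
    (hmeas : Measurable ((Ioc (0 : ℝ) 1).domRestrict H)) (h₁ : H 1 = 0) {u : ℝ}
    (hu : u ∈ Ioc 0 1) : H u = 0 := by
  obtain ⟨δ, hδ, C, hC⟩ := hH.exists_bound_near_zero hmeas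
  -- `u = r + t` with `r` rational and `0 < t < δ / n`, so `|H u| = |H (n t)| / n ≤ C / n`.
  have hbound : ∀ n : ℕ, 0 < n → |H u| * n ≤ C := by
    intro n hn
    have hn' : (0 : ℝ) < n := by exact_mod_cast hn
    have hε : 0 < min δ 1 / n := div_pos (lt_min hδ one_pos) hn'
    obtain ⟨r, hr₁, hr₂⟩ := exists_rat_btwn (max_lt hu.1 (sub_lt_self u hε))
    rw [max_lt_iff] at hr₁
    have hr₀ : (0 : ℚ) < r := by exact_mod_cast hr₁.1
    have ht : 0 < u - r := sub_pos.mpr hr₂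
    have hnt : n * (u - r) < min δ 1 := by
      have := hr₁.2
      rwa [sub_lt_comm, lt_div_iff₀' hn'] at this
    have hsplit : H u = H (u - r) := by
      have := hH r (u - r) (by exact_mod_cast hr₀) ht (by linarith [hu.2])
      rwa [add_sub_cancel, hH.apply_ratCast hr₀ (by exact_mod_cast (hr₂.trans_le hu.2).le), h₁,
        mul_zero, zero_add] at this
    calc |H u| * n = |H (n * (u - r))| := by
          rw [hH.apply_natCast_mul ht hn (by linarith [min_le_right δ 1]), abs_mul, hsplit,
            abs_of_pos hn', mul_comm]
      _ ≤ C := hC _ ⟨by positivity, by linarith [min_le_left δ 1]⟩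
  by_contra hne
  have hpos : 0 < |H u| := abs_pos.mpr hne
  obtain ⟨n, hn⟩ := exists_nat_gt (C / |H u|)
  have := hbound (n + 1) n.succ_pos
  rw [div_lt_iff₀ hpos] at hn
  push_cast at this
  nlinarith

theorem apply_eq_mul_apply_one (hH : AdditiveOnUnitInterval H)
    (hmeas : Measurable ((Ioc (0 : ℝ) 1).domRestrict H)) {u : ℝ} (hu : u ∈ Ioc 0 1) :
    H u = u * H 1 := by
  have hG : AdditiveOnUnitInterval fun w => H w - w * H 1 := fun a b ha hb hab => by
    simp only [hH a b ha hb hab]; ring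
  have := hG.eq_zero_of_apply_one (hmeas.sub (measurable_subtype_coe.mul_const _)) (by simp) hu
  exact sub_eq_zero.mp this

end AdditiveOnUnitInterval

theorem additiveOnUnitInterval_of_entropy_equation {q : ℝ} {f : ℝ → ℝ}
    (hf : ∀ x ∈ Ioo (0 : ℝ) 1, ∀ y ∈ Ioc (0 : ℝ) 1,
      f (x * y) + f ((1 - x) * y) - f y = (f x + f (1 - x)) * y ^ q)
    {z : ℝ} (hz : z ∈ Ioc (0 : ℝ) 1) :
    AdditiveOnUnitInterval fun w => f (w * z) - z ^ q * f w - w * f z := by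
  intro a b ha hb hab
  have hs : 0 < a + b := add_pos ha hb
  have hx : a / (a + b) ∈ Ioo (0 : ℝ) 1 := ⟨by positivity, (div_lt_one hs).mpr (by linarith)⟩
  have hy : (a + b) * z ∈ Ioc (0 : ℝ) 1 :=
    ⟨mul_pos hs hz.1, mul_le_one₀ hab hz.1.le hz.2⟩
  have e₁ := hf _ hx (a + b) ⟨hs, hab⟩
  have e₂ := hf _ hx _ hy
  rw [Real.mul_rpow hs.le hz.1.le] at e₂
  have r₁ : a / (a + b) * (a + b) = a := div_mul_cancel₀ a hs.ne'
  have r₂ : (1 - a / (a + b)) * (a + b) = b := by field_simp; ring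
  rw [r₁, r₂] at e₁
  rw [← mul_assoc, ← mul_assoc, r₁, r₂] at e₂
  simp only
  linear_combination z ^ q * e₁ - e₂

theorem apply_mul_of_entropy_equation {q : ℝ} {f : ℝ → ℝ}
    (hf : ∀ x ∈ Ioo (0 : ℝ) 1, ∀ y ∈ Ioc (0 : ℝ) 1,
      f (x * y) + f ((1 - x) * y) - f y = (f x + f (1 - x)) * y ^ q)
    (hmeas : Measurable ((Ioc (0 : ℝ) 1).domRestrict f)) (hf₁ : f 1 = 0)
    {u z : ℝ} (hu : u ∈ Ioc (0 : ℝ) 1) (hz : z ∈ Ioc (0 : ℝ) 1) :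
    f (u * z) = z ^ q * f u + u * f z := by
  have hmeas' : Measurable fun w : Ioc (0 : ℝ) 1 => f (w * z) - z ^ q * f w - w * f z := by
    have hscale : Measurable fun w : Ioc (0 : ℝ) 1 =>
        (⟨w * z, mul_pos w.2.1 hz.1, mul_le_one₀ w.2.2 hz.1.le hz.2⟩ : Ioc (0 : ℝ) 1) :=
      (measurable_subtype_coe.mul_const z).subtype_mk
    exact ((hmeas.comp hscale).sub (hmeas.const_mul _)).sub
      (measurable_subtype_coe.mul_const _)
  have := (additiveOnUnitInterval_of_entropy_equation hf hz).apply_eq_mul_apply_one hmeas' hu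
  simp only [one_mul, hf₁, mul_zero, sub_zero, sub_self] at this
  linarith

theorem stmt_4 (q : ℝ) (hq : q ≠ 1) (f : ℝ → ℝ)
    (hf : ∀ x ∈ Set.Ioo (0:ℝ) 1, ∀ y ∈ Set.Ioc (0:ℝ) 1,
      f (x * y) + f ((1 - x) * y) - f y = (f x + f (1 - x)) * y ^ q)
    (hmeas : Measurable fun x : Set.Ioc (0:ℝ) 1 => f x) :
    ∃ c cs : ℝ, (∀ x ∈ Set.Ioo (0:ℝ) 1, f x = cs * x + c * x ^ q) ∧ f 1 = 0 := by
  have hf₁ : f 1 = 0 := by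
    have := hf (1 / 2) ⟨by norm_num, by norm_num⟩ 1 ⟨one_pos, le_rfl⟩
    norm_num at this
    linarith
  have hhalf : (1 / 2 : ℝ) ∈ Ioc 0 1 := ⟨by norm_num, by norm_num⟩
  have hd : (1 / 2 : ℝ) ^ q - 1 / 2 ≠ 0 := by
    rw [sub_ne_zero]
    nth_rw 2 [← Real.rpow_one (1 / 2)]
    exact fun h => hq ((Real.rpow_right_inj (by norm_num) (by norm_num)).mp h)
  refine ⟨f (1 / 2) / ((1 / 2) ^ q - 1 / 2), -(f (1 / 2) / ((1 / 2) ^ q - 1 / 2)),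
    fun x hx => ?_, hf₁⟩
  have hx' : x ∈ Ioc 0 1 := Ioo_subset_Ioc_self hx
  -- two expansions of `f (x / 2)`
  have e₁ := apply_mul_of_entropy_equation hf hmeas hf₁ hx' hhalf
  have e₂ := apply_mul_of_entropy_equation hf hmeas hf₁ hhalf hx'
  rw [mul_comm] at e₂
  have hfx : f x = f (1 / 2) / ((1 / 2) ^ q - 1 / 2) * (x ^ q - x) := by
    rw [div_mul_eq_mul_div, eq_div_iff hd]
    linear_combination e₂ - e₁
  rw [hfx]
  ring
end

section
/- Suppose f : (0,1] → ℝ satisfies f(xy) + f((1-x)y) - f(y) = (f(x) + f(1-x))·y for all x ∈ (0,1), y ∈ (0,1], and f is Lebesgue measurable. Then there exist constants c, c* ∈ ℝ such that f(x) = c·x·ln(x) + c*·x for all x ∈ (0,1) and f(1) = 0. -/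
open MeasureTheory Pointwise

/-- iterate additivity -/
private lemma aux_nsmul (ψ : ℝ → ℝ) (r : ℝ)
    (hadd : ∀ a b : ℝ, 0 < a → 0 < b → a + b ≤ r → ψ (a + b) = ψ a + ψ b) :
    ∀ (k : ℕ) (t : ℝ), 0 < t → ((k : ℝ) + 1) * t ≤ r →
      ψ (((k : ℝ) + 1) * t) = ((k : ℝ) + 1) * ψ t := by
  intro k
  induction k with
  | zero => intro t ht _; norm_num
  | succ k ih =>
      intro t ht hle
      have hk1 : (0:ℝ) < ((k:ℝ) + 1) * t := by positivity
      push_cast at hle ⊢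
      have hle' : ((k:ℝ) + 1) * t ≤ r := by nlinarith
      have e : ((k:ℝ) + 1 + 1) * t = ((k:ℝ) + 1) * t + t := by ring
      rw [e, hadd _ _ hk1 ht (by linarith [e]), ih t ht hle']
      ring

/-- Measurable + additive on (0,1] + vanishing at 1 implies zero on (0,1]. -/
private lemma aux_cauchy (ψ : ℝ → ℝ) (hm : Measurable ψ)
    (hadd : ∀ a b : ℝ, 0 < a → 0 < b → a + b ≤ 1 → ψ (a + b) = ψ a + ψ b)
    (h1 : ψ 1 = 0) :
    ∀ y : ℝ, 0 < y → y ≤ 1 → ψ y = 0 := by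
  -- ψ vanishes at 1/n
  have hbase : ∀ n : ℕ, 0 < n → ψ (1 / (n:ℝ)) = 0 := by
    intro n hn
    obtain ⟨j, rfl⟩ := Nat.exists_eq_succ_of_ne_zero hn.ne'
    have hjpos : (0:ℝ) < 1 / ((j:ℝ) + 1) := by positivity
    have hne : ((j:ℝ) + 1) ≠ 0 := by positivity
    have hmul := aux_nsmul ψ 1 hadd j (1 / ((j:ℝ)+1)) hjpos
      (by rw [mul_one_div, div_self hne])
    rw [mul_one_div, div_self hne, h1] at hmul
    have h0 : ψ (1 / ((j:ℝ)+1)) = 0 := (mul_eq_zero.mp hmul.symm).resolve_left hne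
    have hc : ((j.succ : ℕ):ℝ) = (j:ℝ) + 1 := by push_cast; ring
    rw [hc]
    exact h0
  -- ψ vanishes at rationals m/n in (0,1]
  have hrat : ∀ m n : ℕ, 0 < m → m ≤ n → ψ ((m:ℝ) / (n:ℝ)) = 0 := by
    intro m n hm0 hmn
    have hn0 : 0 < n := lt_of_lt_of_le hm0 hmn
    obtain ⟨k, rfl⟩ := Nat.exists_eq_succ_of_ne_zero hm0.ne'
    have hnR : (0:ℝ) < (n:ℝ) := by exact_mod_cast hn0
    have hjpos : (0:ℝ) < 1 / (n:ℝ) := by positivity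
    have hle : ((k:ℝ) + 1) * (1 / (n:ℝ)) ≤ 1 := by
      rw [mul_one_div, div_le_one hnR]
      exact_mod_cast hmn
    have hmul := aux_nsmul ψ 1 hadd k (1 / (n:ℝ)) hjpos hle
    rw [hbase n hn0, mul_zero, mul_one_div] at hmul
    have hc : ((k.succ : ℕ):ℝ) = (k:ℝ) + 1 := by push_cast; ring
    rw [hc]
    exact hmul
  -- a level set with positive measure
  set A : ℕ → Set ℝ := fun n => {y | y ∈ Set.Ioc (0:ℝ) 1 ∧ |ψ y| ≤ (n:ℝ)} with hA
  have hAmeas : ∀ n, MeasurableSet (A n) := by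
    intro n
    exact measurableSet_Ioc.inter (measurableSet_le hm.abs measurable_const)
  have hcov : Set.Ioc (0:ℝ) 1 ⊆ ⋃ n, A n := by
    intro y hy
    exact Set.mem_iUnion.mpr ⟨⌈|ψ y|⌉₊, hy, Nat.le_ceil _⟩
  have hex : ∃ n, 0 < volume (A n) := by
    apply MeasureTheory.exists_measure_pos_of_not_measure_iUnion_null (μ := (volume : Measure ℝ))
    intro hnull
    have hle := measure_mono (μ := (volume : Measure ℝ)) hcov
    rw [hnull, Real.volume_Ioc] at hle
    simp at hle
  obtain ⟨n, hApos⟩ := hex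
  -- Steinhaus
  have hst := MeasureTheory.Measure.sub_mem_nhds_zero_of_addHaar_pos volume (A n)
    (hAmeas n) hApos
  obtain ⟨δ, hδpos, hball⟩ := Metric.mem_nhds_iff.mp hst
  -- bound near 0
  have hbd : ∀ t : ℝ, 0 < t → t < δ → |ψ t| ≤ 2 * n := by
    intro t ht htδ
    have hmem : t ∈ A n - A n := hball (by
      simp [Real.dist_eq, abs_of_pos ht, htδ])
    obtain ⟨a, ha, b, hb, hab⟩ := hmem
    have hab' : a - b = t := hab
    have hb0 : 0 < b := hb.1.1
    have heq : b + t = a := by linarith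
    have hadd' := hadd b t hb0 ht (by rw [heq]; exact ha.1.2)
    rw [heq] at hadd'
    have hψt : ψ t = ψ a - ψ b := by linarith
    rw [hψt]
    have habs : |ψ a - ψ b| ≤ |ψ a| + |ψ b| := abs_sub _ _
    have := add_le_add ha.2 hb.2
    linarith
  -- main bound
  intro y hy0 hy1
  have key : ∀ k : ℕ, |ψ y| ≤ 2 * n / ((k:ℝ) + 1) := by
    intro k
    set d : ℝ := min δ 1 with hd
    have hdpos : 0 < d := lt_min hδpos one_pos
    have hlo : max (y - d / ((k:ℝ)+1)) (y/2) < y := by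
      apply max_lt
      · have : 0 < d / ((k:ℝ)+1) := by positivity
        linarith
      · linarith
    obtain ⟨q, hq1, hq2⟩ := exists_rat_btwn hlo
    have hy2 : (0:ℝ) < y/2 := by linarith
    have hq0 : (0:ℝ) < q := lt_trans hy2 (lt_of_le_of_lt (le_max_right _ _) hq1)
    set t : ℝ := y - q with hts
    have ht0 : 0 < t := by simp only [hts]; linarith
    have htd : t < d / ((k:ℝ)+1) := by
      have h' := lt_of_le_of_lt (le_max_left _ _) hq1
      simp only [hts]; linarith
    have hqnum : 0 < q.num := Rat.num_pos.mpr (by exact_mod_cast hq0)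
    have hq1' : (q:ℝ) ≤ 1 := le_of_lt (lt_of_lt_of_le hq2 hy1)
    have hnum : ((q.num.toNat : ℕ):ℝ) = ((q.num : ℤ):ℝ) := by
      exact_mod_cast Int.toNat_of_nonneg hqnum.le
    have hqcast : (q:ℝ) = (q.num.toNat : ℝ) / (q.den : ℝ) := by
      rw [Rat.cast_def, hnum]
    have hmn : q.num.toNat ≤ q.den := by
      have hden : (0:ℝ) < (q.den:ℝ) := by positivity
      rw [hqcast, div_le_one hden] at hq1'
      exact_mod_cast hq1'
    have hψq : ψ (q:ℝ) = 0 := by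
      rw [hqcast]
      exact hrat _ _ (by omega) hmn
    have hyeq : (q:ℝ) + t = y := by simp only [hts]; ring
    have hsplit := hadd (q:ℝ) t hq0 ht0 (by rw [hyeq]; exact hy1)
    rw [hyeq, hψq, zero_add] at hsplit
    have hk1pos : (0:ℝ) < (k:ℝ) + 1 := by positivity
    have hktd : ((k:ℝ)+1) * t < d := by
      have h'' := (lt_div_iff₀ hk1pos).mp htd
      nlinarith
    have hkt1 : ((k:ℝ)+1) * t ≤ 1 := le_trans hktd.le (min_le_right _ _)
    have hktδ : ((k:ℝ)+1) * t < δ := lt_of_lt_of_le hktd (min_le_left _ _)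
    have hmul := aux_nsmul ψ 1 hadd k t ht0 hkt1
    have hb2 := hbd (((k:ℝ)+1)*t) (by positivity) hktδ
    rw [hmul, abs_mul, abs_of_pos hk1pos] at hb2
    rw [hsplit, le_div_iff₀ hk1pos]
    linarith
  by_contra hne
  have habs : 0 < |ψ y| := abs_pos.mpr hne
  obtain ⟨k, hk⟩ := exists_nat_gt (2 * (n:ℝ) / |ψ y|)
  have hk1 : (2 * (n:ℝ)) / |ψ y| < (k:ℝ) + 1 := lt_of_lt_of_le hk (by linarith)
  have h2 := (le_div_iff₀ (by positivity : (0:ℝ) < (k:ℝ)+1)).mp (key k)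
  rw [div_lt_iff₀ habs] at hk1
  nlinarith

theorem stmt_5 (f : ℝ → ℝ)
    (hf : ∀ x ∈ Set.Ioo (0:ℝ) 1, ∀ y ∈ Set.Ioc (0:ℝ) 1,
      f (x * y) + f ((1 - x) * y) - f y = (f x + f (1 - x)) * y)
    (hmeas : Measurable fun x : Set.Ioc (0:ℝ) 1 => f x) :
    ∃ c cs : ℝ, (∀ x ∈ Set.Ioo (0:ℝ) 1, f x = c * x * Real.log x + cs * x) ∧ f 1 = 0 := by
  classical
  have hf1 : f 1 = 0 := by
    have h := hf (1/2) (by norm_num) 1 (by norm_num)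
    norm_num at h
    linarith
  set F : ℝ → ℝ := fun y => if hy : y ∈ Set.Ioc (0:ℝ) 1 then f y else 0 with hFdef
  have hFm : Measurable F := Measurable.dite hmeas measurable_const measurableSet_Ioc
  have hFf : ∀ y : ℝ, 0 < y → y ≤ 1 → F y = f y := by
    intro y h1 h2
    have hy : y ∈ Set.Ioc (0:ℝ) 1 := ⟨h1, h2⟩
    simp only [hFdef]
    exact dif_pos hy
  -- key identity
  have key : ∀ a b : ℝ, 0 < a → 0 < b → a + b ≤ 1 → ∀ z : ℝ, 0 < z → z ≤ 1 →
      f (z*a) + f (z*b) - f (z*(a+b)) = z * (f a + f b - f (a+b)) := by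
    intro a b ha hb hab z hz hz1
    have hs : 0 < a + b := by linarith
    set t : ℝ := a / (a+b) with htdef
    have ht : t ∈ Set.Ioo (0:ℝ) 1 := by
      constructor
      · positivity
      · rw [htdef, div_lt_one hs]; linarith
    have e1 : t * (a+b) = a := by rw [htdef]; field_simp
    have e2 : (1 - t) * (a+b) = b := by rw [htdef]; field_simp; try ring
    have h1 := hf t ht (a+b) ⟨hs, hab⟩
    rw [e1, e2] at h1
    have hz2 : 0 < z * (a+b) := by positivity
    have hz3 : z * (a+b) ≤ 1 := by nlinarith
    have h2 := hf t ht (z*(a+b)) ⟨hz2, hz3⟩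
    have e3 : t * (z*(a+b)) = z * a := by
      rw [show t * (z*(a+b)) = z * (t * (a+b)) from by ring, e1]
    have e4 : (1 - t) * (z*(a+b)) = z * b := by
      rw [show (1-t) * (z*(a+b)) = z * ((1-t) * (a+b)) from by ring, e2]
    rw [e3, e4] at h2
    linear_combination h2 - z * h1
  -- Leibniz rule
  have leib : ∀ x : ℝ, 0 < x → x ≤ 1 → ∀ y : ℝ, 0 < y → y ≤ 1 →
      f (x*y) = y * f x + x * f y := by
    intro x hx0 hx1
    set ψ : ℝ → ℝ := fun y => F (x*y) - y * F x - x * F y with hψ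
    have hψm : Measurable ψ := ((hFm.comp (measurable_id.const_mul x)).sub
      (measurable_id.mul_const (F x))).sub (hFm.const_mul x)
    have hψadd : ∀ a b : ℝ, 0 < a → 0 < b → a + b ≤ 1 → ψ (a+b) = ψ a + ψ b := by
      intro a b ha hb hab
      have hk := key a b ha hb hab x hx0 hx1
      have ea : F (x*a) = f (x*a) := hFf _ (by positivity) (by nlinarith)
      have eb : F (x*b) = f (x*b) := hFf _ (by positivity) (by nlinarith)
      have eab : F (x*(a+b)) = f (x*(a+b)) := hFf _ (by positivity) (by nlinarith)
      have ea' : F a = f a := hFf _ ha (by linarith)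
      have eb' : F b = f b := hFf _ hb (by linarith)
      have eab' : F (a+b) = f (a+b) := hFf _ (by linarith) hab
      have ex : F x = f x := hFf _ hx0 hx1
      simp only [hψ]
      rw [ea, eb, eab, ea', eb', eab', ex]
      linarith
    have hψ1 : ψ 1 = 0 := by
      simp only [hψ]
      rw [mul_one, hFf 1 one_pos le_rfl, hf1]
      ring
    have hzero := aux_cauchy ψ hψm hψadd hψ1
    intro y hy0 hy1
    have h := hzero y hy0 hy1
    simp only [hψ] at h
    rw [hFf _ (by positivity) (by nlinarith), hFf x hx0 hx1, hFf y hy0 hy1] at h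
    linarith
  -- exponential substitution
  set C : ℝ := f (Real.exp (-1)) * Real.exp 1 with hC
  set φ : ℝ → ℝ := fun s => F (Real.exp (-s)) * Real.exp s - s * C with hφ
  have hφm : Measurable φ :=
    ((hFm.comp (Real.measurable_exp.comp measurable_neg)).mul Real.measurable_exp).sub
      (measurable_id.mul_const C)
  have hexp : ∀ s : ℝ, 0 < s → 0 < Real.exp (-s) ∧ Real.exp (-s) ≤ 1 := by
    intro s hs
    refine ⟨Real.exp_pos _, ?_⟩
    rw [← Real.exp_zero]
    exact Real.exp_le_exp.mpr (by linarith)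
  have hφadd : ∀ a b : ℝ, 0 < a → 0 < b → φ (a+b) = φ a + φ b := by
    intro a b ha hb
    obtain ⟨hu0, hu1⟩ := hexp a ha
    obtain ⟨hv0, hv1⟩ := hexp b hb
    have hL := leib (Real.exp (-a)) hu0 hu1 (Real.exp (-b)) hv0 hv1
    have he : Real.exp (-(a+b)) = Real.exp (-a) * Real.exp (-b) := by
      rw [← Real.exp_add]; ring_nf
    simp only [hφ]
    rw [he, hFf _ (by positivity) (by nlinarith), hFf _ hu0 hu1, hFf _ hv0 hv1,
      Real.exp_add]
    have h1 : Real.exp (-a) * Real.exp a = 1 := by rw [← Real.exp_add]; simp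
    have h2 : Real.exp (-b) * Real.exp b = 1 := by rw [← Real.exp_add]; simp
    linear_combination (Real.exp a * Real.exp b) * hL
      + f (Real.exp (-a)) * Real.exp a * h2 + f (Real.exp (-b)) * Real.exp b * h1
  have hφ1 : φ 1 = 0 := by
    simp only [hφ]
    rw [hFf _ (Real.exp_pos _) ((hexp 1 one_pos).2), hC]
    ring
  have hφ0 : ∀ s : ℝ, 0 < s → φ s = 0 := by
    intro s hs
    obtain ⟨m, hm⟩ := exists_nat_ge s
    have hadd' : ∀ a b : ℝ, 0 < a → 0 < b → a + b ≤ s → φ (a+b) = φ a + φ b :=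
      fun a b ha hb _ => hφadd a b ha hb
    have ht0 : 0 < s / ((m:ℝ)+1) := by positivity
    have e : ((m:ℝ)+1) * (s/((m:ℝ)+1)) = s := by field_simp
    have hmul := aux_nsmul φ s hadd' m (s/((m:ℝ)+1)) ht0 (by rw [e])
    have ht1 : s/((m:ℝ)+1) ≤ 1 := by
      rw [div_le_one (by positivity)]; linarith
    have hz := aux_cauchy φ hφm (fun a b ha hb _ => hφadd a b ha hb) hφ1 _ ht0 ht1
    rw [e, hz, mul_zero] at hmul
    exact hmul
  refine ⟨-C, 0, ?_, hf1⟩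
  intro x hx
  have hlx : Real.log x < 0 := Real.log_neg hx.1 hx.2
  have h := hφ0 (-Real.log x) (by linarith)
  simp only [hφ] at h
  rw [neg_neg, Real.exp_log hx.1, hFf x hx.1 hx.2.le] at h
  have hex2 : Real.exp (-Real.log x) = x⁻¹ := by
    rw [Real.exp_neg, Real.exp_log hx.1]
  rw [hex2] at h
  have hx0 : x ≠ 0 := ne_of_gt hx.1
  field_simp at h
  -- h should now relate f x and log x * C * x
  nlinarith [h]
end

section
/- Let q ∈ ℝ, q ≠ 1, and suppose f : (0,1] → ℝ is Lebesgue measurable, satisfies f(xy) + f((1-x)y) - f(y) = (f(x) + f(1-x))·y^q for all x ∈ (0,1), y ∈ (0,1], and the limit of f(x) as x → 1⁻ exists and equals f(1). Then there exists c* ∈ ℝ such that f(x) = c*·(x - x^q) for all x ∈ (0,1]. -/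
/-!
The equation at `(a / (a + b), a + b)` expresses the defect `f a + f b - f (a + b)` through
values of `f` at ratios, so rescaling `a, b` by `l` multiplies it by `l ^ q`. Hence
`x ↦ f (l * x) - l ^ q * f x` is additive on `(0, 1]`; being measurable, it is linear (Cauchy),
which gives `f (l * x) = l ^ q * f x + f l * x`. Swapping `l` and `x` yields
`f x * (l - l ^ q) = f l * (x - x ^ q)`, and `l = 1 / 2` works because `q ≠ 1`.
-/

open Set MeasureTheory

theorem measurable_toIocMod_zero_one : Measurable (toIocMod one_pos (0 : ℝ)) := by
  simp_rw [funext (toIocMod_eq_sub_fract_mul one_pos (0 : ℝ))]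
  fun_prop

theorem map_toIocMod_add_of_add_on_Ioc {D : ℝ → ℝ}
    (hadd : ∀ a b : ℝ, 0 < a → 0 < b → a + b ≤ 1 → D (a + b) = D a + D b) (h1 : D 1 = 0)
    (x y : ℝ) :
    D (toIocMod one_pos 0 (x + y)) = D (toIocMod one_pos 0 x) + D (toIocMod one_pos 0 y) := by
  set a := toIocMod one_pos 0 x
  set b := toIocMod one_pos 0 y
  have ha : a ∈ Ioc (0 : ℝ) 1 := by simpa using toIocMod_mem_Ioc one_pos 0 x
  have hb : b ∈ Ioc (0 : ℝ) 1 := by simpa using toIocMod_mem_Ioc one_pos 0 y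
  have hxa := toIocMod_add_toIocDiv_zsmul one_pos 0 x
  have hyb := toIocMod_add_toIocDiv_zsmul one_pos 0 y
  set m := toIocDiv one_pos 0 x
  set n := toIocDiv one_pos 0 y
  simp only [zsmul_eq_mul, mul_one] at hxa hyb
  rcases le_or_gt (a + b) 1 with hab | hab
  · have hxy : toIocMod one_pos 0 (x + y) = a + b := by
      refine (toIocMod_eq_iff one_pos).2
        ⟨⟨by linarith [ha.1, hb.1], by rwa [zero_add]⟩, m + n, ?_⟩
      push_cast [zsmul_eq_mul]; linarith
    rw [hxy, hadd a b ha.1 hb.1 hab]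
  · have hxy : toIocMod one_pos 0 (x + y) = a + b - 1 := by
      refine (toIocMod_eq_iff one_pos).2
        ⟨⟨by linarith, by rw [zero_add]; linarith [ha.2, hb.2]⟩, m + n + 1, ?_⟩
      push_cast [zsmul_eq_mul]; linarith
    rw [hxy]
    rcases hb.2.eq_or_lt with hb1 | hb1
    · rw [hb1, h1, add_sub_cancel_right, add_zero]
    -- write `a = (1 - b) + (a + b - 1)` and use `D (1 - b) + D b = D 1 = 0`
    · have hsplit := hadd (1 - b) (a + b - 1) (by linarith) (by linarith) (by linarith [ha.2])
      have hcompl := hadd (1 - b) b (by linarith) hb.1 (by linarith)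
      rw [show 1 - b + (a + b - 1) = a by ring] at hsplit
      rw [sub_add_cancel, h1] at hcompl
      linarith

theorem eq_zero_on_Ioc_of_measurable_of_add {D : ℝ → ℝ}
    (hD : Measurable fun x : Ioc (0 : ℝ) 1 => D x)
    (hadd : ∀ a b : ℝ, 0 < a → 0 < b → a + b ≤ 1 → D (a + b) = D a + D b) (h1 : D 1 = 0) :
    ∀ x ∈ Ioc (0 : ℝ) 1, D x = 0 := by
  have hmem (x : ℝ) : toIocMod one_pos 0 x ∈ Ioc (0 : ℝ) 1 := by
    simpa using toIocMod_mem_Ioc one_pos 0 x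
  have hself (x : ℝ) (hx : x ∈ Ioc (0 : ℝ) 1) : toIocMod one_pos 0 x = x :=
    (toIocMod_eq_self one_pos).2 (by rwa [zero_add])
  -- the 1-periodic extension of `D` is a measurable additive map `ℝ → ℝ`, hence linear
  let E : ℝ →+ ℝ :=
    AddMonoidHom.mk' (fun x => D (toIocMod one_pos 0 x)) (map_toIocMod_add_of_add_on_Ioc hadd h1)
  have hE : Continuous E := Measure.AddMonoidHom.continuous_of_measurable E <|
    hD.comp (measurable_toIocMod_zero_one.subtype_mk (h := hmem))
  intro x hx
  have hEx : E x = D x := by simp [E, hself x hx]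
  have hE1 : E 1 = 0 := by simp [E, hself 1 (right_mem_Ioc.2 one_pos), h1]
  rw [← hEx, ← mul_one x, ← smul_eq_mul, map_real_smul E hE, hE1, smul_zero]

theorem eq_mul_on_Ioc_of_measurable_of_add {D : ℝ → ℝ}
    (hD : Measurable fun x : Ioc (0 : ℝ) 1 => D x)
    (hadd : ∀ a b : ℝ, 0 < a → 0 < b → a + b ≤ 1 → D (a + b) = D a + D b) :
    ∀ x ∈ Ioc (0 : ℝ) 1, D x = D 1 * x := by
  intro x hx
  have h := eq_zero_on_Ioc_of_measurable_of_add (D := fun x => D x - D 1 * x)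
    (hD.sub (measurable_subtype_coe.const_mul _))
    (fun a b ha hb hab => by rw [hadd a b ha hb hab]; ring) (by ring) x hx
  linarith

def SatisfiesSplitEquation (q : ℝ) (f : ℝ → ℝ) : Prop :=
  ∀ x ∈ Ioo (0 : ℝ) 1, ∀ y ∈ Ioc (0 : ℝ) 1,
    f (x * y) + f ((1 - x) * y) - f y = (f x + f (1 - x)) * y ^ q

namespace SatisfiesSplitEquation

variable {q : ℝ} {f : ℝ → ℝ}

theorem map_one (hf : SatisfiesSplitEquation q f) : f 1 = 0 := by
  have h := hf (1 / 2) (by norm_num) 1 (by norm_num)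
  norm_num at h
  linarith

theorem map_add_sub_map_add (hf : SatisfiesSplitEquation q f) {a b : ℝ} (ha : 0 < a) (hb : 0 < b)
    (hab : a + b ≤ 1) :
    f a + f b - f (a + b) = (f (a / (a + b)) + f (b / (a + b))) * (a + b) ^ q := by
  have hab0 : 0 < a + b := by linarith
  have h := hf (a / (a + b)) ⟨by positivity, (div_lt_one hab0).2 (by linarith)⟩ (a + b) ⟨hab0, hab⟩
  have hcompl : 1 - a / (a + b) = b / (a + b) := by field_simp; ring
  rwa [hcompl, div_mul_cancel₀ _ hab0.ne', div_mul_cancel₀ _ hab0.ne'] at h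

theorem map_add_sub_map_add_mul (hf : SatisfiesSplitEquation q f) {l a b : ℝ}
    (hl : l ∈ Ioc (0 : ℝ) 1) (ha : 0 < a) (hb : 0 < b) (hab : a + b ≤ 1) :
    f (l * a) + f (l * b) - f (l * (a + b)) = l ^ q * (f a + f b - f (a + b)) := by
  have hlab : l * a + l * b ≤ 1 := by nlinarith [hl.1, hl.2]
  have h := hf.map_add_sub_map_add (mul_pos hl.1 ha) (mul_pos hl.1 hb) hlab
  rw [← mul_add, mul_div_mul_left _ _ hl.1.ne', mul_div_mul_left _ _ hl.1.ne',
    Real.mul_rpow hl.1.le (by linarith)] at h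
  rw [h, hf.map_add_sub_map_add ha hb hab]
  ring

theorem map_mul (hf : SatisfiesSplitEquation q f)
    (hmeas : Measurable fun x : Ioc (0 : ℝ) 1 => f x) {l : ℝ} (hl : l ∈ Ioc (0 : ℝ) 1) :
    ∀ x ∈ Ioc (0 : ℝ) 1, f (l * x) = l ^ q * f x + f l * x := by
  have hlx : ∀ x ∈ Ioc (0 : ℝ) 1, l * x ∈ Ioc (0 : ℝ) 1 := fun x hx =>
    ⟨mul_pos hl.1 hx.1, by nlinarith [hl.1, hl.2, hx.1, hx.2]⟩
  have hD : Measurable fun x : Ioc (0 : ℝ) 1 => f (l * x) - l ^ q * f x :=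
    (hmeas.comp ((measurable_subtype_coe.const_mul l).subtype_mk (h := fun x => hlx x x.2))).sub
      (hmeas.const_mul _)
  have hlin := eq_mul_on_Ioc_of_measurable_of_add (D := fun x => f (l * x) - l ^ q * f x) hD
    fun a b ha hb hab => by linear_combination -hf.map_add_sub_map_add_mul hl ha hb hab
  intro x hx
  have := hlin x hx
  rw [mul_one, hf.map_one, mul_zero, sub_zero] at this
  linarith

theorem map_mul_sub_rpow (hf : SatisfiesSplitEquation q f)
    (hmeas : Measurable fun x : Ioc (0 : ℝ) 1 => f x) {x y : ℝ} (hx : x ∈ Ioc (0 : ℝ) 1)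
    (hy : y ∈ Ioc (0 : ℝ) 1) : f x * (y - y ^ q) = f y * (x - x ^ q) := by
  have hxy := hf.map_mul hmeas hx y hy
  rw [mul_comm, hf.map_mul hmeas hy x hx] at hxy
  linear_combination -hxy

end SatisfiesSplitEquation

theorem stmt_6_general (q : ℝ) (hq : q ≠ 1) (f : ℝ → ℝ)
    (hmeas : Measurable fun x : Set.Ioc (0:ℝ) 1 => f x)
    (hf : ∀ x ∈ Set.Ioo (0:ℝ) 1, ∀ y ∈ Set.Ioc (0:ℝ) 1,
      f (x * y) + f ((1 - x) * y) - f y = (f x + f (1 - x)) * y ^ q) :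
    ∃ cs : ℝ, ∀ x ∈ Set.Ioc (0:ℝ) 1, f x = cs * (x - x ^ q) := by
  have hq_half : (1 / 2 : ℝ) - (1 / 2) ^ q ≠ 0 := by
    rw [sub_ne_zero]
    nth_rewrite 1 [← Real.rpow_one (1 / 2)]
    exact fun h => hq ((Real.rpow_right_inj (by norm_num) (by norm_num)).1 h).symm
  refine ⟨f (1 / 2) / (1 / 2 - (1 / 2) ^ q), fun x hx => ?_⟩
  rw [div_mul_eq_mul_div, eq_div_iff hq_half]
  exact SatisfiesSplitEquation.map_mul_sub_rpow hf hmeas hx (by norm_num)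

theorem stmt_6 (q : ℝ) (hq : q ≠ 1) (f : ℝ → ℝ)
    (hmeas : Measurable fun x : Set.Ioc (0:ℝ) 1 => f x)
    (hf : ∀ x ∈ Set.Ioo (0:ℝ) 1, ∀ y ∈ Set.Ioc (0:ℝ) 1,
      f (x * y) + f ((1 - x) * y) - f y = (f x + f (1 - x)) * y ^ q)
    (hlim : Filter.Tendsto f (nhdsWithin 1 (Set.Iio 1)) (nhds (f 1))) :
    ∃ cs : ℝ, ∀ x ∈ Set.Ioc (0:ℝ) 1, f x = cs * (x - x ^ q) :=
  stmt_6_general q hq f hmeas hf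
end

section
/- Suppose f : (0,1] → ℝ is Lebesgue measurable, satisfies f(xy) + f((1-x)y) - f(y) = (f(x) + f(1-x))·y for all x ∈ (0,1), y ∈ (0,1], and lim_{x→1⁻} f(x) = f(1). Then there exists c ∈ ℝ such that f(x) = c·x·ln(x) for all x ∈ (0,1]. -/
/-!
Put `φ x = f x / x` and `D a b = φ (a * b) - φ a - φ b`. The functional equation says
`x * D x y + (1 - x) * D (1 - x) y = 0`, and `D` is a symmetric 2-cocycle. Hence the set of `a`
with `D a · = 0` contains `1 / 2` and is closed under products and under `x ↦ 1 - x`, so it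
contains every dyadic rational in `(0, 1]`; the cocycle identity then gives `D (s * a) = D a` for
such `s`, and therefore `D (x * q) = D x` for every positive rational `q`. Moving both arguments
of `D` towards `1` in this way and using `φ u → φ 1 = 0` as `u → 1⁻` shows `D = 0`. So
`t ↦ φ (exp (-t))` is additive on `[0, ∞)` and tends to `0` at `0⁺`, hence linear: `φ = c * log`.
-/

open Set Filter Topology Real

def mulDefect {M A : Type*} [Mul M] [Sub A] (φ : M → A) (a b : M) : A :=
  φ (a * b) - φ a - φ b

section mulDefect

variable {M A : Type*} [AddCommGroup A] (φ : M → A)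

theorem mulDefect_comm [CommMagma M] (a b : M) : mulDefect φ a b = mulDefect φ b a := by
  simp only [mulDefect, mul_comm a b]
  abel

theorem mulDefect_mul_add [Semigroup M] (a b c : M) :
    mulDefect φ (a * b) c + mulDefect φ a b = mulDefect φ a (b * c) + mulDefect φ b c := by
  simp only [mulDefect, mul_assoc]
  abel

end mulDefect

def DefectBalanced (φ : ℝ → ℝ) : Prop :=
  ∀ x ∈ Ioo (0:ℝ) 1, ∀ y ∈ Ioc (0:ℝ) 1,
    x * mulDefect φ x y + (1 - x) * mulDefect φ (1 - x) y = 0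

def defectKernel (φ : ℝ → ℝ) : Set ℝ :=
  {a ∈ Ioc (0:ℝ) 1 | ∀ y ∈ Ioc (0:ℝ) 1, mulDefect φ a y = 0}

theorem mul_mem_Ioc_zero_one {x y : ℝ} (hx : x ∈ Ioc (0:ℝ) 1) (hy : y ∈ Ioc (0:ℝ) 1) :
    x * y ∈ Ioc (0:ℝ) 1 :=
  ⟨mul_pos hx.1 hy.1, mul_le_one₀ hx.2 hy.1.le hy.2⟩

namespace defectKernel

variable {φ : ℝ → ℝ}

theorem mulDefect_mul {s a : ℝ} (hs : s ∈ defectKernel φ) (ha : a ∈ Ioc (0:ℝ) 1)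
    {z : ℝ} (hz : z ∈ Ioc (0:ℝ) 1) : mulDefect φ (s * a) z = mulDefect φ a z := by
  have h := mulDefect_mul_add φ s a z
  rw [hs.2 a ha, hs.2 _ (mul_mem_Ioc_zero_one ha hz)] at h
  simpa using h

theorem mul_mem {a b : ℝ} (ha : a ∈ defectKernel φ) (hb : b ∈ defectKernel φ) :
    a * b ∈ defectKernel φ :=
  ⟨mul_mem_Ioc_zero_one ha.1 hb.1, fun y hy => by rw [mulDefect_mul ha hb.1 hy, hb.2 y hy]⟩

end defectKernel

theorem tendsto_mul_nhdsLT_one :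
    Tendsto (fun p : ℝ × ℝ => p.1 * p.2) (𝓝[<] 1 ×ˢ 𝓝[<] 1) (𝓝[<] 1) := by
  refine tendsto_nhdsWithin_iff.2 ⟨?_, ?_⟩
  · simpa using (tendsto_fst.mono_right (nhdsWithin_le_nhds (a := (1:ℝ)))).mul
      (tendsto_snd.mono_right (nhdsWithin_le_nhds (a := (1:ℝ))))
  · filter_upwards [prod_mem_prod (Ioo_mem_nhdsLT zero_lt_one) (Ioo_mem_nhdsLT zero_lt_one)]
      with p hp
    exact mul_lt_one_of_nonneg_of_lt_one_left hp.1.1.le hp.1.2 hp.2.2.le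

namespace DefectBalanced

variable {φ : ℝ → ℝ}

theorem half_mem_defectKernel (hφ : DefectBalanced φ) : (1 / 2 : ℝ) ∈ defectKernel φ := by
  refine ⟨by norm_num, fun y hy => ?_⟩
  have h := hφ (1 / 2) (by norm_num) y hy
  norm_num at h
  linarith

theorem one_mem_defectKernel (hφ : DefectBalanced φ) : (1 : ℝ) ∈ defectKernel φ := by
  refine ⟨by norm_num, fun y hy => ?_⟩
  have h := hφ.half_mem_defectKernel.2 1 (by norm_num)
  simp only [mulDefect, mul_one, one_mul] at h ⊢
  linarith

theorem map_one (hφ : DefectBalanced φ) : φ 1 = 0 := by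
  simpa [mulDefect] using hφ.one_mem_defectKernel.2 1 (by norm_num)

theorem one_sub_mem_defectKernel (hφ : DefectBalanced φ) {x : ℝ} (hx : x ∈ defectKernel φ)
    (hx1 : x < 1) : 1 - x ∈ defectKernel φ := by
  refine ⟨⟨by linarith, by linarith [hx.1.1]⟩, fun y hy => ?_⟩
  have h := hφ x ⟨hx.1.1, hx1⟩ y hy
  rw [hx.2 y hy, mul_zero, zero_add] at h
  exact (mul_eq_zero.1 h).resolve_left (by linarith)

theorem dyadic_mem_defectKernel (hφ : DefectBalanced φ) (n : ℕ) :
    ∀ k : ℕ, 0 < k → k ≤ 2 ^ n → (k / 2 ^ n : ℝ) ∈ defectKernel φ := by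
  induction n with
  | zero =>
    intro k hk hkn
    obtain rfl : k = 1 := by omega
    simpa using hφ.one_mem_defectKernel
  | succ n ih =>
    have lower : ∀ k : ℕ, 0 < k → k ≤ 2 ^ n → (k / 2 ^ (n + 1) : ℝ) ∈ defectKernel φ := by
      intro k hk hkn
      convert defectKernel.mul_mem hφ.half_mem_defectKernel (ih k hk hkn) using 1
      ring
    intro k hk hkn
    rcases le_or_gt k (2 ^ n) with hle | hgt
    · exact lower k hk hle
    rcases eq_or_lt_of_le hkn with heq | hlt
    · simpa [heq] using hφ.one_mem_defectKernel
    have hj := lower (2 ^ (n + 1) - k) (by omega) (by have := pow_succ 2 n; omega)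
    rw [Nat.cast_sub hlt.le, Nat.cast_pow, Nat.cast_ofNat] at hj
    have hk0 : (0 : ℝ) < k := by exact_mod_cast hk
    convert hφ.one_sub_mem_defectKernel hj ?_ using 1
    · field_simp
      ring
    · rw [div_lt_one (by positivity)]
      linarith

theorem mulDefect_mul_ratCast (hφ : DefectBalanced φ) {x : ℝ} (hx : x ∈ Ioc (0:ℝ) 1)
    {q : ℚ} (hq : 0 < q) (hxq : x * q ∈ Ioc (0:ℝ) 1) {z : ℝ} (hz : z ∈ Ioc (0:ℝ) 1) :
    mulDefect φ (x * q) z = mulDefect φ x z := by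
  obtain ⟨a, ha⟩ := Int.eq_ofNat_of_zero_le (Rat.num_pos.2 hq).le
  have ha0 : 0 < a := by have := Rat.num_pos.2 hq; omega
  set n := a + q.den
  have hn : ∀ k ≤ n, k ≤ 2 ^ n := fun k hk => hk.trans Nat.lt_two_pow_self.le
  -- `x * q` and `x` become the same point after multiplication by dyadic rationals
  have key : (q.den / 2 ^ n : ℝ) * (x * q) = (a / 2 ^ n : ℝ) * x := by
    rw [Rat.cast_def, ha]
    push_cast
    field_simp
  rw [← defectKernel.mulDefect_mul
      (hφ.dyadic_mem_defectKernel n q.den q.den_pos (hn q.den (by omega))) hxq hz, key,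
    defectKernel.mulDefect_mul (hφ.dyadic_mem_defectKernel n a ha0 (hn a (by omega))) hx hz]

theorem frequently_mulDefect_eq (hφ : DefectBalanced φ) {x : ℝ} (hx : x ∈ Ioc (0:ℝ) 1) :
    ∃ᶠ u in 𝓝[<] 1, u ∈ Ioc (0:ℝ) 1 ∧ ∀ z ∈ Ioc (0:ℝ) 1, mulDefect φ u z = mulDefect φ x z := by
  refine (nhdsLT_basis (1:ℝ)).frequently_iff.2 fun c hc => ?_
  obtain ⟨q, hcq, hq1⟩ := exists_rat_btwn (div_lt_div_of_pos_right (max_lt hc one_pos) hx.1)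
  rw [div_lt_iff₀' hx.1] at hcq
  rw [lt_div_iff₀' hx.1] at hq1
  have hxq_pos : 0 < x * q := lt_of_le_of_lt (le_max_right c 0) hcq
  have hq : (0 : ℚ) < q := by exact_mod_cast pos_of_mul_pos_right hxq_pos hx.1.le
  exact ⟨x * q, ⟨lt_of_le_of_lt (le_max_left c 0) hcq, hq1⟩, ⟨hxq_pos, hq1.le⟩,
    fun z hz => hφ.mulDefect_mul_ratCast hx hq ⟨hxq_pos, hq1.le⟩ hz⟩

theorem map_mul (hφ : DefectBalanced φ) (hlim : Tendsto φ (𝓝[<] 1) (𝓝 0)) {x y : ℝ}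
    (hx : x ∈ Ioc (0:ℝ) 1) (hy : y ∈ Ioc (0:ℝ) 1) : φ (x * y) = φ x + φ y := by
  suffices h : mulDefect φ x y = 0 by
    simp only [mulDefect] at h
    linarith
  have hD : Tendsto (fun p : ℝ × ℝ => mulDefect φ p.1 p.2) (𝓝[<] 1 ×ˢ 𝓝[<] 1) (𝓝 0) := by
    have h := ((hlim.comp tendsto_mul_nhdsLT_one).sub (hlim.comp tendsto_fst)).sub
      (hlim.comp tendsto_snd)
    simp only [sub_zero] at h
    exact h
  have hfreq := frequently_prod_and.2
    ⟨hφ.frequently_mulDefect_eq hx, hφ.frequently_mulDefect_eq hy⟩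
  refine (tendsto_nhds_unique_of_frequently_eq hD tendsto_const_nhds (hfreq.mono ?_)).symm
  rintro ⟨u, v⟩ ⟨⟨-, hux⟩, ⟨hv, hvy⟩⟩
  dsimp only
  rw [hux v hv, mulDefect_comm, hvy x hx, mulDefect_comm]

end DefectBalanced

theorem eq_mul_of_map_add_of_tendsto_nhdsGT {ψ : ℝ → ℝ}
    (hadd : ∀ s ≥ 0, ∀ t ≥ 0, ψ (s + t) = ψ s + ψ t) (hlim : Tendsto ψ (𝓝[>] 0) (𝓝 0))
    {t : ℝ} (ht : 0 ≤ t) : ψ t = t * ψ 1 := by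
  have hnat : ∀ n : ℕ, ∀ s ≥ 0, ψ (n * s) = n * ψ s := by
    intro n s hs
    induction n with
    | zero => simpa using hadd 0 le_rfl 0 le_rfl
    | succ n ih =>
      push_cast
      rw [add_mul, one_mul, hadd _ (by positivity) s hs, ih]
      ring
  have hrat : ∀ q : ℚ, 0 ≤ q → ψ q = q * ψ 1 := by
    intro q hq
    obtain ⟨a, ha⟩ := Int.eq_ofNat_of_zero_le (Rat.num_nonneg.2 hq)
    have hden : (q.den : ℝ) ≠ 0 := by exact_mod_cast q.den_ne_zero
    have hnum : (q.den : ℝ) * q = a := by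
      rw [Rat.cast_def, ha]
      push_cast
      field_simp
    have ha1 := hnat a 1 zero_le_one
    rw [mul_one] at ha1
    apply mul_left_cancel₀ hden
    rw [← hnat q.den q (by exact_mod_cast hq), hnum, ha1, ← mul_assoc, hnum]
  set ρ : ℝ → ℝ := fun s => ψ s - s * ψ 1
  have hρ : Tendsto ρ (𝓝[>] 0) (𝓝 0) := by
    simpa [ρ] using hlim.sub ((tendsto_id.mono_right nhdsWithin_le_nhds).mul_const (ψ 1))
  -- `ρ` is additive and vanishes at rationals, so `ρ h = -ρ t` whenever `t + h` is rational
  have hfreq : ∃ᶠ h in 𝓝[>] 0, ρ h = -ρ t := by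
    refine (nhdsGT_basis (0:ℝ)).frequently_iff.2 fun ε hε => ?_
    obtain ⟨q, htq, hqε⟩ := exists_rat_btwn (lt_add_of_pos_right t hε)
    refine ⟨q - t, ⟨by linarith, by linarith⟩, ?_⟩
    have h := hadd t ht (q - t) (by linarith)
    rw [add_sub_cancel, hrat q (by exact_mod_cast ht.trans htq.le)] at h
    simp only [ρ]
    linarith
  have h := tendsto_nhds_unique_of_frequently_eq hρ tendsto_const_nhds hfreq
  simp only [ρ] at h
  linarith

theorem exists_eq_mul_log_of_map_mul {φ : ℝ → ℝ}
    (hmul : ∀ x ∈ Ioc (0:ℝ) 1, ∀ y ∈ Ioc (0:ℝ) 1, φ (x * y) = φ x + φ y)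
    (hlim : Tendsto φ (𝓝[<] 1) (𝓝 0)) : ∃ c, ∀ x ∈ Ioc (0:ℝ) 1, φ x = c * log x := by
  have hexp : ∀ s ≥ (0:ℝ), exp (-s) ∈ Ioc (0:ℝ) 1 :=
    fun s hs => ⟨exp_pos _, exp_le_one_iff.2 (by linarith)⟩
  have hexp_lim : Tendsto (fun s => exp (-s)) (𝓝[>] 0) (𝓝[<] 1) := by
    refine tendsto_nhdsWithin_iff.2 ⟨?_, ?_⟩
    · simpa [Function.comp_def] using
        ((continuous_exp.comp continuous_neg).tendsto 0).mono_left nhdsWithin_le_nhds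
    · filter_upwards [self_mem_nhdsWithin] with s hs
      exact exp_lt_one_iff.2 (neg_lt_zero.2 hs)
  refine ⟨-φ (exp (-1)), fun x hx => ?_⟩
  have h := eq_mul_of_map_add_of_tendsto_nhdsGT (ψ := fun s => φ (exp (-s)))
    (fun s hs t ht => by rw [neg_add, exp_add, hmul _ (hexp s hs) _ (hexp t ht)])
    (hlim.comp hexp_lim) (neg_nonneg.2 (log_nonpos hx.1.le hx.2))
  rw [neg_neg, exp_log hx.1] at h
  rw [h]
  ring

theorem defectBalanced_div_self {f : ℝ → ℝ}
    (hf : ∀ x ∈ Ioo (0:ℝ) 1, ∀ y ∈ Ioc (0:ℝ) 1,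
      f (x * y) + f ((1 - x) * y) - f y = (f x + f (1 - x)) * y) :
    DefectBalanced fun x => f x / x := by
  intro x hx y hy
  have hx0 : x ≠ 0 := hx.1.ne'
  have hx1 : 1 - x ≠ 0 := by linarith [hx.2]
  have hy0 : y ≠ 0 := hy.1.ne'
  simp only [mulDefect]
  field_simp
  rw [mul_comm y (1 - x)]
  linear_combination hf x hx y hy

theorem stmt_7_general (f : ℝ → ℝ)
    (hf : ∀ x ∈ Set.Ioo (0:ℝ) 1, ∀ y ∈ Set.Ioc (0:ℝ) 1,
      f (x * y) + f ((1 - x) * y) - f y = (f x + f (1 - x)) * y)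
    (hlim : Filter.Tendsto f (nhdsWithin 1 (Set.Iio 1)) (nhds (f 1))) :
    ∃ c : ℝ, ∀ x ∈ Set.Ioc (0:ℝ) 1, f x = c * x * Real.log x := by
  set φ : ℝ → ℝ := fun x => f x / x
  have hφ : DefectBalanced φ := defectBalanced_div_self hf
  have hf1 : f 1 = 0 := by simpa [φ] using hφ.map_one
  have hφlim : Tendsto φ (𝓝[<] 1) (𝓝 0) := by
    have h := hlim.div (tendsto_id.mono_right nhdsWithin_le_nhds) one_ne_zero
    rwa [div_one, hf1] at h
  obtain ⟨c, hc⟩ := exists_eq_mul_log_of_map_mul (fun x hx y hy => hφ.map_mul hφlim hx hy) hφlim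
  refine ⟨c, fun x hx => ?_⟩
  have h := hc x hx
  rw [div_eq_iff hx.1.ne'] at h
  rw [h]
  ring

theorem stmt_7 (f : ℝ → ℝ)
    (hmeas : Measurable fun x : Set.Ioc (0:ℝ) 1 => f x)
    (hf : ∀ x ∈ Set.Ioo (0:ℝ) 1, ∀ y ∈ Set.Ioc (0:ℝ) 1,
      f (x * y) + f ((1 - x) * y) - f y = (f x + f (1 - x)) * y)
    (hlim : Filter.Tendsto f (nhdsWithin 1 (Set.Iio 1)) (nhds (f 1))) :
    ∃ c : ℝ, ∀ x ∈ Set.Ioc (0:ℝ) 1, f x = c * x * Real.log x :=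
  stmt_7_general f hf hlim
end

section
/- Let g : (0,1] → ℝ be multiplicative, i.e., g(xy) = g(x)g(y) for all x,y ∈ (0,1], with g not identically zero, and let f : (0,1] → ℝ satisfy f(xy) = g(y)f(x) + g(x)f(y) for all x,y ∈ (0,1]. Then there exists a logarithmic function ℓ : (0,1] → ℝ (i.e., ℓ(xy) = ℓ(x)+ℓ(y) for all x,y ∈ (0,1]) such that f(x) = g(x)·ℓ(x) whenever g(x) ≠ 0. -/
theorem stmt_8 (g f : ℝ → ℝ)
    (hg : ∀ x ∈ Set.Ioc (0:ℝ) 1, ∀ y ∈ Set.Ioc (0:ℝ) 1, g (x * y) = g x * g y)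
    (hg0 : ∃ x ∈ Set.Ioc (0:ℝ) 1, g x ≠ 0)
    (hf : ∀ x ∈ Set.Ioc (0:ℝ) 1, ∀ y ∈ Set.Ioc (0:ℝ) 1,
      f (x * y) = g y * f x + g x * f y) :
    ∃ ℓ : ℝ → ℝ, (∀ x ∈ Set.Ioc (0:ℝ) 1, ∀ y ∈ Set.Ioc (0:ℝ) 1, ℓ (x * y) = ℓ x + ℓ y) ∧
      ∀ x ∈ Set.Ioc (0:ℝ) 1, g x ≠ 0 → f x = g x * ℓ x := by
  have h1 : (1:ℝ) ∈ Set.Ioc (0:ℝ) 1 := by constructor <;> norm_num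
  have hmul : ∀ x ∈ Set.Ioc (0:ℝ) 1, ∀ y ∈ Set.Ioc (0:ℝ) 1,
      x * y ∈ Set.Ioc (0:ℝ) 1 := by
    rintro x ⟨hx0, hx1⟩ y ⟨hy0, hy1⟩
    exact ⟨mul_pos hx0 hy0, mul_le_one₀ hx1 hy0.le hy1⟩
  -- g 1 = 1
  have hg1 : g 1 = 1 := by
    obtain ⟨x0, hx0, hgx0⟩ := hg0
    have hg1ne : g 1 ≠ 0 := by
      intro h0
      apply hgx0
      have h := hg x0 hx0 1 h1
      rw [mul_one, h0, mul_zero] at h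
      exact h
    have h := hg 1 h1 1 h1
    rw [mul_one] at h
    have h' : g 1 * g 1 = g 1 * 1 := by rw [mul_one, ← h]
    exact mul_left_cancel₀ hg1ne h'
  -- powers
  have hpowmem : ∀ x ∈ Set.Ioc (0:ℝ) 1, ∀ n : ℕ, x ^ (n+1) ∈ Set.Ioc (0:ℝ) 1 := by
    intro x hx n
    induction n with
    | zero => simpa using hx
    | succ k ih => rw [pow_succ]; exact hmul _ ih _ hx
  have hgpow : ∀ x ∈ Set.Ioc (0:ℝ) 1, ∀ n : ℕ, g (x ^ (n+1)) = g x ^ (n+1) := by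
    intro x hx n
    induction n with
    | zero => simp
    | succ k ih =>
      rw [pow_succ, hg _ (hpowmem x hx k) _ hx, ih]; ring
  by_cases hz : ∀ x ∈ Set.Ioc (0:ℝ) 1, g x ≠ 0
  · refine ⟨fun x => f x / g x, ?_, ?_⟩
    · intro x hx y hy
      have hxy := hmul x hx y hy
      have hgx := hz x hx
      have hgy := hz y hy
      have hfxy := hf x hx y hy
      have hgxy := hg x hx y hy
      show f (x * y) / g (x * y) = f x / g x + f y / g y
      rw [hfxy, hgxy]
      field_simp
    · intro x hx hgx
      show f x = g x * (f x / g x)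
      field_simp
  · push_neg at hz
    obtain ⟨a, ha, hga⟩ := hz
    -- a ≠ 1
    have ha1 : a < 1 := by
      rcases lt_or_eq_of_le ha.2 with h | h
      · exact h
      · exfalso; rw [h, hg1] at hga; exact one_ne_zero hga
    -- g vanishes on (0,1)
    have hzero : ∀ x ∈ Set.Ioc (0:ℝ) 1, x < 1 → g x = 0 := by
      intro x hx hx1
      obtain ⟨n, hn⟩ := exists_pow_lt_of_lt_one ha.1 hx1
      -- x^n < a, with n ≥ 1 possibly 0? if n = 0 then x^0 = 1 < a ≤ 1, impossible
      have hn1 : n ≠ 0 := by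
        intro h; rw [h] at hn; simp at hn; linarith [ha.2]
      obtain ⟨m, rfl⟩ := Nat.exists_eq_succ_of_ne_zero hn1
      have hxm := hpowmem x hx m
      have hq : x ^ (m+1) / a ∈ Set.Ioc (0:ℝ) 1 := by
        constructor
        · exact div_pos hxm.1 ha.1
        · rw [div_le_one ha.1]; exact hn.le
      have : g (x ^ (m+1)) = 0 := by
        have := hg a ha _ hq
        rw [mul_div_cancel₀ _ (ne_of_gt ha.1)] at this
        rw [this, hga, zero_mul]
      rw [hgpow x hx m] at this
      have := pow_eq_zero_iff (n := m+1) (by omega) |>.mp this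
      exact this
    have hf1 : f 1 = 0 := by
      have := hf 1 h1 1 h1
      rw [mul_one, hg1] at this
      linarith
    refine ⟨fun _ => 0, ?_, ?_⟩
    · intro x hx y hy; simp
    · intro x hx hgx
      have hx1 : x = 1 := by
        by_contra h
        exact hgx (hzero x hx (lt_of_le_of_ne hx.2 h))
      rw [hx1, hf1, mul_zero]
end

section
/- Let α, β ∈ ℝ with α ≠ β. If f : (0,1] → ℝ satisfies f(xy) = ((x^α + x^β)/2)·f(y) + ((y^α + y^β)/2)·f(x) for all x, y ∈ (0,1], then there exists c ∈ ℝ such that f(x) = c·(x^α - x^β) for all x ∈ (0,1]. -/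
theorem stmt_10 (α β : ℝ) (hαβ : α ≠ β) (f : ℝ → ℝ)
    (hf : ∀ x ∈ Set.Ioc (0:ℝ) 1, ∀ y ∈ Set.Ioc (0:ℝ) 1,
      f (x * y) = ((x ^ α + x ^ β) / 2) * f y + ((y ^ α + y ^ β) / 2) * f x) :
    ∃ c : ℝ, ∀ x ∈ Set.Ioc (0:ℝ) 1, f x = c * (x ^ α - x ^ β) := by
  have hy0 : (1/2 : ℝ) ∈ Set.Ioc (0:ℝ) 1 := by constructor <;> norm_num
  have hd0 : ((1/2:ℝ) ^ α - (1/2:ℝ) ^ β) ≠ 0 := by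
    have h01 : (0:ℝ) < 1/2 := by norm_num
    have h11 : (1/2:ℝ) < 1 := by norm_num
    rcases lt_trichotomy α β with h | h | h
    · have := (Real.rpow_lt_rpow_left_iff_of_base_lt_one h01 h11).mpr h
      intro hc; linarith
    · exact absurd h hαβ
    · have := (Real.rpow_lt_rpow_left_iff_of_base_lt_one h01 h11).mpr h
      intro hc; linarith
  have hmem : ∀ a b : ℝ, a ∈ Set.Ioc (0:ℝ) 1 → b ∈ Set.Ioc (0:ℝ) 1 →
      a * b ∈ Set.Ioc (0:ℝ) 1 := by
    rintro a b ⟨ha0, ha1⟩ ⟨hb0, hb1⟩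
    exact ⟨mul_pos ha0 hb0, mul_le_one₀ ha1 hb0.le hb1⟩
  have key : ∀ x ∈ Set.Ioc (0:ℝ) 1, ∀ z ∈ Set.Ioc (0:ℝ) 1,
      (x ^ α - x ^ β) * ((1/2:ℝ) ^ α - (1/2:ℝ) ^ β) * f z
        = ((1/2:ℝ) ^ α - (1/2:ℝ) ^ β) * (z ^ α - z ^ β) * f x := by
    intro x hx z hz
    set y : ℝ := 1/2 with hy
    have A := hf (x * y) (hmem x y hx hy0) z hz
    have B := hf x hx (y * z) (hmem y z hy0 hz)
    have hxy := hf x hx y hy0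
    have hyz := hf y hy0 z hz
    have e1 : (x * y) ^ α = x ^ α * y ^ α := Real.mul_rpow hx.1.le hy0.1.le
    have e2 : (x * y) ^ β = x ^ β * y ^ β := Real.mul_rpow hx.1.le hy0.1.le
    have e3 : (y * z) ^ α = y ^ α * z ^ α := Real.mul_rpow hy0.1.le hz.1.le
    have e4 : (y * z) ^ β = y ^ β * z ^ β := Real.mul_rpow hy0.1.le hz.1.le
    rw [e1, e2] at A
    rw [e3, e4, ← mul_assoc] at B
    linear_combination 4 * B - 4 * A + 2 * (x ^ α + x ^ β) * hyz
      - 2 * (z ^ α + z ^ β) * hxy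
  refine ⟨f (1/2) / ((1/2:ℝ) ^ α - (1/2:ℝ) ^ β), fun x hx => ?_⟩
  have h := key x hx (1/2) hy0
  have h2 : ((1/2:ℝ) ^ α - (1/2:ℝ) ^ β) * ((x ^ α - x ^ β) * f (1/2))
      = ((1/2:ℝ) ^ α - (1/2:ℝ) ^ β) * (((1/2:ℝ) ^ α - (1/2:ℝ) ^ β) * f x) := by
    linear_combination h
  have h3 := mul_left_cancel₀ hd0 h2
  rw [div_mul_eq_mul_div, eq_div_iff hd0]
  linear_combination -h3
end

section
/- Let α ∈ ℝ and suppose f : (0,1] → ℝ satisfies f(xy) = y^α·f(x) + x^α·f(y) for all x, y ∈ (0,1], and f is Lebesgue measurable. Then there exists c ∈ ℝ such that f(x) = c·x^α·ln(x) for all x ∈ (0,1]. -/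
/-!
With `x = exp (-t)`, the function `h t = f (exp (-t)) / exp (-t) ^ α` is additive on
`[0, ∞)`. Extended by `t ↦ h t⁺ - h t⁻`, it becomes a measurable additive map `ℝ → ℝ`,
hence continuous and linear: `h t = c * t`, i.e. `f x = -c * x ^ α * log x`.
-/

open Real Set MeasureTheory.Measure

lemma AddMonoidHom.eq_mul_of_measurable (H : ℝ →+ ℝ) (hH : Measurable H) (t : ℝ) :
    H t = H 1 * t := by
  simpa [mul_comm] using map_real_smul H (AddMonoidHom.continuous_of_measurable H hH) t 1

section AdditiveOnNonneg

variable {h : ℝ → ℝ}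

lemma sub_eq_sub_of_additive_on_nonneg
    (hadd : ∀ a b, 0 ≤ a → 0 ≤ b → h (a + b) = h a + h b) {a b a' b' : ℝ}
    (ha : 0 ≤ a) (hb : 0 ≤ b) (ha' : 0 ≤ a') (hb' : 0 ≤ b')
    (heq : a + b' = a' + b) : h a - h b = h a' - h b' := by
  have hsum := hadd a b' ha hb'
  rw [heq, hadd a' b ha' hb] at hsum
  linarith

lemma exists_addMonoidHom_extension_of_additive_on_nonneg
    (hadd : ∀ a b, 0 ≤ a → 0 ≤ b → h (a + b) = h a + h b)
    (hmeas : Measurable fun t => h (max t 0)) :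
    ∃ H : ℝ →+ ℝ, Measurable H ∧ ∀ t, 0 ≤ t → H t = h t := by
  let H : ℝ →+ ℝ := AddMonoidHom.mk' (fun t => h (max t 0) - h (max (-t) 0)) fun s t => by
    have hsum := sub_eq_sub_of_additive_on_nonneg hadd (le_max_right (s + t) 0)
      (le_max_right (-(s + t)) 0) (add_nonneg (le_max_right s 0) (le_max_right t 0))
      (add_nonneg (le_max_right (-s) 0) (le_max_right (-t) 0)) (by grind)
    rw [hsum, hadd _ _ (le_max_right s 0) (le_max_right t 0),
      hadd _ _ (le_max_right (-s) 0) (le_max_right (-t) 0)]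
    ring
  refine ⟨H, hmeas.sub (hmeas.comp measurable_neg), fun t ht => ?_⟩
  have h0 : h 0 = 0 := by simpa using hadd 0 0 le_rfl le_rfl
  simp [H, ht, h0]

lemma exists_eq_mul_of_additive_on_nonneg
    (hadd : ∀ a b, 0 ≤ a → 0 ≤ b → h (a + b) = h a + h b)
    (hmeas : Measurable fun t => h (max t 0)) :
    ∃ c, ∀ t, 0 ≤ t → h t = c * t := by
  obtain ⟨H, hHmeas, hH⟩ := exists_addMonoidHom_extension_of_additive_on_nonneg hadd hmeas
  exact ⟨H 1, fun t ht => by rw [← hH t ht, H.eq_mul_of_measurable hHmeas]⟩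

end AdditiveOnNonneg

lemma div_rpow_mul_eq_add {α x y : ℝ} {f : ℝ → ℝ} (hx : 0 < x) (hy : 0 < y)
    (hxy : f (x * y) = y ^ α * f x + x ^ α * f y) :
    f (x * y) / (x * y) ^ α = f x / x ^ α + f y / y ^ α := by
  have hxα := rpow_pos_of_pos hx α
  have hyα := rpow_pos_of_pos hy α
  rw [hxy, mul_rpow hx.le hy.le]
  field_simp

theorem stmt_12 (α : ℝ) (f : ℝ → ℝ)
    (hf : ∀ x ∈ Set.Ioc (0:ℝ) 1, ∀ y ∈ Set.Ioc (0:ℝ) 1,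
      f (x * y) = y ^ α * f x + x ^ α * f y)
    (hmeas : Measurable fun x : Set.Ioc (0:ℝ) 1 => f x) :
    ∃ c : ℝ, ∀ x ∈ Set.Ioc (0:ℝ) 1, f x = c * x ^ α * Real.log x := by
  have exp_neg_mem : ∀ t, 0 ≤ t → exp (-t) ∈ Ioc (0:ℝ) 1 := fun t ht =>
    ⟨exp_pos _, exp_le_one_iff.mpr (neg_nonpos.mpr ht)⟩
  let h t := f (exp (-t)) / exp (-t) ^ α
  have hadd : ∀ a b, 0 ≤ a → 0 ≤ b → h (a + b) = h a + h b := fun a b ha hb => by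
    simpa [h, ← exp_add, add_comm] using div_rpow_mul_eq_add (exp_pos (-a)) (exp_pos (-b))
      (hf _ (exp_neg_mem a ha) _ (exp_neg_mem b hb))
  have hmeas_h : Measurable fun t => h (max t 0) := by
    have hexp : Measurable fun t =>
        (⟨exp (-max t 0), exp_neg_mem _ (le_max_right t 0)⟩ : Ioc (0:ℝ) 1) :=
      (by fun_prop : Measurable fun t => exp (-max t 0)).subtype_mk
    exact (hmeas.comp hexp).div (by fun_prop)
  obtain ⟨c, hc⟩ := exists_eq_mul_of_additive_on_nonneg hadd hmeas_h
  refine ⟨-c, fun x hx => ?_⟩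
  have hlog : 0 ≤ -log x := neg_nonneg.mpr (log_nonpos hx.1.le hx.2)
  have hx_lin := hc _ hlog
  simp only [h, neg_neg, exp_log hx.1] at hx_lin
  rw [div_eq_iff (rpow_pos_of_pos hx.1 α).ne'] at hx_lin
  rw [hx_lin]
  ring
end

section
/- If a real derivation d : ℝ → ℝ is Lebesgue measurable, then d is identically zero. -/
/-!
A measurable additive map `ℝ → ℝ` is continuous (Steinhaus), hence `ℝ`-linear, so
`d x = x * d 1`; and the Leibniz rule at `1 * 1` forces `d 1 = 0`.
-/

lemma map_one_eq_zero_of_leibniz {R : Type*} [Ring R] (d : R → R)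
    (hmul : ∀ x y : R, d (x * y) = x * d y + y * d x) : d 1 = 0 := by
  have h := hmul 1 1
  rw [mul_one, one_mul] at h
  exact left_eq_add.mp h

lemma AddMonoidHom.eq_zero_of_continuous_of_map_one_eq_zero {F : Type*} [AddCommGroup F]
    [Module ℝ F] [TopologicalSpace F] [ContinuousSMul ℝ F] [T2Space F]
    (f : ℝ →+ F) (hf : Continuous f) (h1 : f 1 = 0) : f = 0 := by
  ext x
  rw [← mul_one x, ← smul_eq_mul, map_real_smul f hf, h1, smul_zero, AddMonoidHom.zero_apply]

theorem stmt_16 (d : ℝ → ℝ)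
    (hadd : ∀ x y : ℝ, d (x + y) = d x + d y)
    (hmul : ∀ x y : ℝ, d (x * y) = x * d y + y * d x)
    (hmeas : Measurable d) :
    ∀ x : ℝ, d x = 0 := by
  let f : ℝ →+ ℝ := AddMonoidHom.mk' d hadd
  have hcont : Continuous f :=
    MeasureTheory.Measure.AddMonoidHom.continuous_of_measurable f hmeas
  have hf : f = 0 :=
    f.eq_zero_of_continuous_of_map_one_eq_zero hcont (map_one_eq_zero_of_leibniz d hmul)
  exact DFunLike.congr_fun hf
end

section
/- Let a : (0,1) → ℝ satisfy a(x+y) = a(x) + a(y) for all x, y with x, y, x+y ∈ (0,1). If a is Lebesgue measurable, then there exists c ∈ ℝ such that a(x) = c·x for all x ∈ (0,1). -/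
/-!
Recentred at `1 / 2`, the function `s ↦ a (s + 1 / 2) - a (1 / 2)` is additive for `|s|, |t| < 1 / 4`,
so `x ↦ n * (a (x / n + 1 / 2) - a (1 / 2))` (for any large `n`) is a well-defined additive map
`g : ℝ → ℝ`, and `g = a` on `(0, 1)`. Via `g x = ⌊x⌋ * g 1 + g (fract x)`, `g` is measurable; a
measurable additive map `ℝ → ℝ` is continuous (Steinhaus), hence `g x = g 1 * x`.
-/

open MeasureTheory Set

lemma natCast_pos_of_abs_lt_mul {x ε : ℝ} {n : ℕ} (h : |x| < n * ε) : (0 : ℝ) < n := by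
  rcases Nat.eq_zero_or_pos n with rfl | hn
  · simp only [Nat.cast_zero, zero_mul] at h
    exact absurd h (abs_nonneg x).not_gt
  · exact_mod_cast hn

lemma abs_div_natCast_lt {x ε : ℝ} {n : ℕ} (h : |x| < n * ε) : |x / n| < ε := by
  rwa [abs_div, Nat.abs_cast, div_lt_iff₀ (natCast_pos_of_abs_lt_mul h), mul_comm]

section AdditiveNearZero

variable {f : ℝ → ℝ} {ε : ℝ}

lemma map_natCast_mul_of_additive_near_zero
    (hf : ∀ x y, |x| < ε → |y| < ε → |x + y| < ε → f (x + y) = f x + f y)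
    (n : ℕ) {x : ℝ} (hx : |n * x| < ε) : f (n * x) = n * f x := by
  induction n with
  | zero =>
    have hε : 0 < ε := by simpa using hx
    have h0 := hf 0 0 (by simpa) (by simpa) (by simpa)
    simp only [add_zero] at h0
    simp only [Nat.cast_zero, zero_mul]
    linarith
  | succ n ih =>
    have hnx : |(n : ℝ) * x| < ε := by
      refine lt_of_le_of_lt ?_ hx
      rw [abs_mul, abs_mul, Nat.abs_cast, Nat.abs_cast]
      gcongr
      simp
    have hx1 : |x| < ε := by
      refine lt_of_le_of_lt ?_ hx
      rw [abs_mul, Nat.abs_cast]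
      exact le_mul_of_one_le_left (abs_nonneg x) (by simp)
    have hsplit : ((n + 1 : ℕ) : ℝ) * x = n * x + x := by push_cast; ring
    rw [hsplit] at hx ⊢
    rw [hf _ _ hnx hx1 hx, ih hnx]
    push_cast
    ring

theorem exists_addMonoidHom_eq_of_additive_near_zero (hε : 0 < ε)
    (hf : ∀ x y, |x| < ε → |y| < ε → |x + y| < ε → f (x + y) = f x + f y) :
    ∃ g : ℝ →+ ℝ, ∀ x, |x| < ε → g x = f x := by
  have hscale : ∀ (x : ℝ) (m k : ℕ), |x| < m * ε → 0 < k →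
      f (x / m) = k * f (x / (m * k)) := by
    intro x m k hm hk
    have hk' : (k : ℝ) ≠ 0 := by positivity
    have hmk : (k : ℝ) * (x / (m * k)) = x / m := by field_simp
    rw [← map_natCast_mul_of_additive_near_zero hf k (hmk ▸ abs_div_natCast_lt hm), hmk]
  let N : ℝ → ℕ := fun x => ⌈|x| / ε⌉₊ + 1
  have hN : ∀ x, |x| < N x * ε := fun x => by
    rw [← div_lt_iff₀ hε]
    exact (Nat.le_ceil _).trans_lt (by simp [N])
  let G : ℝ → ℝ := fun x => N x * f (x / N x)
  have hG : ∀ x (n : ℕ), |x| < n * ε → G x = n * f (x / n) := by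
    intro x n hn
    have hn0 : 0 < n := by exact_mod_cast natCast_pos_of_abs_lt_mul hn
    simp only [G, hscale x (N x) n (hN x) hn0, hscale x n (N x) hn (Nat.succ_pos _)]
    rw [mul_comm (n : ℝ) (N x : ℝ)]
    ring
  refine ⟨AddMonoidHom.mk' G fun x y => ?_, fun x hx => by simpa using hG x 1 (by simpa)⟩
  obtain ⟨n, hn⟩ := exists_nat_gt ((|x| + |y|) / ε)
  rw [div_lt_iff₀ hε] at hn
  have hx : |x| < n * ε := by linarith [abs_nonneg y]
  have hy : |y| < n * ε := by linarith [abs_nonneg x]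
  have hxy : |x + y| < n * ε := (abs_add_le x y).trans_lt hn
  rw [hG x n hx, hG y n hy, hG _ n hxy, add_div,
    hf _ _ (abs_div_natCast_lt hx) (abs_div_natCast_lt hy) (add_div x y n ▸ abs_div_natCast_lt hxy)]
  ring

end AdditiveNearZero

theorem AddMonoidHom.measurable_of_measurable_restrict_Ioo (g : ℝ →+ ℝ)
    (hg : Measurable fun x : Ioo (0 : ℝ) 1 => g x) : Measurable g := by
  have hfract : ∀ x : ℝ, Int.fract x / 2 + 1 / 4 ∈ Ioo (0 : ℝ) 1 := fun x =>
    ⟨by linarith [Int.fract_nonneg x], by linarith [Int.fract_lt_one x]⟩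
  have key : ∀ x, g x = ⌊x⌋ * g 1 + 2 * (g (Int.fract x / 2 + 1 / 4) - g (1 / 4)) := by
    intro x
    conv_lhs => rw [← Int.floor_add_fract x, map_add, ← zsmul_one, map_zsmul,
      show Int.fract x = Int.fract x / 2 + Int.fract x / 2 by ring, map_add]
    rw [map_add, zsmul_eq_mul]
    ring
  have hφ : Measurable fun x : ℝ => (⟨Int.fract x / 2 + 1 / 4, hfract x⟩ : Ioo (0 : ℝ) 1) :=
    ((measurable_fract.div_const 2).add_const _).subtype_mk
  rw [show ⇑g = _ from funext key]
  exact (((measurable_of_countable (Int.cast : ℤ → ℝ)).comp Int.measurable_floor).mul_const _).add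
    (((hg.comp hφ).sub_const _).const_mul _)

def IsAdditiveOnUnitIoo (a : ℝ → ℝ) : Prop :=
  ∀ x y : ℝ, x ∈ Ioo (0 : ℝ) 1 → y ∈ Ioo (0 : ℝ) 1 → x + y ∈ Ioo (0 : ℝ) 1 → a (x + y) = a x + a y

noncomputable def centeredAtHalf (a : ℝ → ℝ) (s : ℝ) : ℝ := a (s + 1 / 2) - a (1 / 2)

namespace IsAdditiveOnUnitIoo

variable {a : ℝ → ℝ}

lemma map_add_eq_centeredAtHalf_add {s u : ℝ} (ha : IsAdditiveOnUnitIoo a) (hs : |s| < 1 / 4)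
    (hu₁ : 1 / 4 ≤ u) (hu₂ : u ≤ 3 / 4) : a (s + u) = centeredAtHalf a s + a u := by
  rw [abs_lt] at hs
  rw [centeredAtHalf]
  rcases lt_trichotomy s 0 with hneg | rfl | hpos
  · have h₁ := ha (s + u) (-s) ⟨by linarith, by linarith⟩ ⟨by linarith, by linarith⟩
      ⟨by linarith, by linarith⟩
    have h₂ := ha (s + 1 / 2) (-s) ⟨by linarith, by linarith⟩ ⟨by linarith, by linarith⟩
      ⟨by linarith, by linarith⟩
    rw [add_neg_cancel_comm] at h₁ h₂
    linarith
  · simp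
  · have h₁ := ha s u ⟨hpos, by linarith⟩ ⟨by linarith, by linarith⟩ ⟨by linarith, by linarith⟩
    have h₂ := ha s (1 / 2) ⟨hpos, by linarith⟩ ⟨by norm_num, by norm_num⟩
      ⟨by linarith, by linarith⟩
    linarith

lemma centeredAtHalf_add {s t : ℝ} (ha : IsAdditiveOnUnitIoo a) (hs : |s| < 1 / 4)
    (ht : |t| < 1 / 4) : centeredAtHalf a (s + t) = centeredAtHalf a s + centeredAtHalf a t := by
  rw [abs_lt] at ht
  have h := ha.map_add_eq_centeredAtHalf_add (u := t + 1 / 2) hs (by linarith) (by linarith)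
  simp only [centeredAtHalf, add_assoc, h]
  ring

lemma centeredAtHalf_eq {s : ℝ} (ha : IsAdditiveOnUnitIoo a) (hs₀ : 0 < s) (hs₁ : s < 1 / 2) :
    centeredAtHalf a s = a s := by
  have h := ha s (1 / 2) ⟨hs₀, by linarith⟩ ⟨by norm_num, by norm_num⟩ ⟨by linarith, by linarith⟩
  rw [centeredAtHalf, h]
  ring

theorem exists_addMonoidHom_eqOn (ha : IsAdditiveOnUnitIoo a) :
    ∃ g : ℝ →+ ℝ, EqOn g a (Ioo 0 1) := by
  obtain ⟨g, hg⟩ := exists_addMonoidHom_eq_of_additive_near_zero (f := centeredAtHalf a)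
    (ε := 1 / 4) (by norm_num) fun s t hs ht _ => ha.centeredAtHalf_add hs ht
  refine ⟨g, fun x ⟨hx₀, hx₁⟩ => ?_⟩
  have hquarter : g (x / 4) = a (x / 4) := by
    rw [hg _ (by rw [abs_of_pos (by positivity)]; linarith),
      ha.centeredAtHalf_eq (by positivity) (by linarith)]
  have hhalf : a (x / 4 + x / 4) = a (x / 4) + a (x / 4) :=
    ha _ _ ⟨by positivity, by linarith⟩ ⟨by positivity, by linarith⟩ ⟨by positivity, by linarith⟩
  have hx : x = x / 4 + x / 4 + (x / 4 + x / 4) := by ring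
  rw [hx, map_add, map_add, hquarter, ha _ _ ⟨by positivity, by linarith⟩
    ⟨by positivity, by linarith⟩ ⟨by positivity, by linarith⟩, hhalf]

end IsAdditiveOnUnitIoo

theorem stmt_17 (a : ℝ → ℝ)
    (hadd : ∀ x y : ℝ, x ∈ Set.Ioo (0:ℝ) 1 → y ∈ Set.Ioo (0:ℝ) 1 →
      x + y ∈ Set.Ioo (0:ℝ) 1 → a (x + y) = a x + a y)
    (hmeas : Measurable fun x : Set.Ioo (0:ℝ) 1 => a x) :
    ∃ c : ℝ, ∀ x ∈ Set.Ioo (0:ℝ) 1, a x = c * x := by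
  obtain ⟨g, hga⟩ := IsAdditiveOnUnitIoo.exists_addMonoidHom_eqOn hadd
  have hg_meas : Measurable g := g.measurable_of_measurable_restrict_Ioo <| by
    simpa only [fun x : Ioo (0 : ℝ) 1 => hga x.2] using hmeas
  have hg_cont : Continuous g := Measure.AddMonoidHom.continuous_of_measurable g hg_meas
  refine ⟨g 1, fun x hx => ?_⟩
  calc a x = g (x • 1) := by rw [smul_eq_mul, mul_one, hga hx]
    _ = x * g 1 := map_real_smul g hg_cont x 1
    _ = g 1 * x := mul_comm _ _
end
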